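/- arXiv:1209.3251 — 2 statements merged into one kernel-verified Lean document; each statement's English description precedes it below -/
import Mathlib

section
/- Let G be a countable group, ⪯ a Conradian left-ordering of G, and consider a dynamical realization of (G,⪯). Let N ⊆ G be the set of elements having a fixed point in ℝ. Then N is a normal subgroup of G. Moreover, if there is g ∈ G having no fixed point, then G/N is a nontrivial torsion-free abelian group which acts freely on the nonempty set of global fixed points of N. -/
structure LeftOrder (G : Type*) [Group G] where
  lt : G → G → Prop
  irrefl : ∀ a, ¬ lt a a
  trans : ∀ a b c, lt a b → lt b c → lt a c
  total : ∀ a b, lt a b ∨ a = b ∨ lt b a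
  mul_left : ∀ a b c, lt a b → lt (c * a) (c * b)

namespace LeftOrder

variable {G : Type*} [Group G]

def le (o : LeftOrder G) (a b : G) : Prop := o.lt a b ∨ a = b

noncomputable def cone (o : LeftOrder G) : G → Bool :=
  fun g => @decide (o.lt 1 g) (Classical.propDecidable _)

noncomputable instance : TopologicalSpace (LeftOrder G) :=
  TopologicalSpace.induced cone inferInstance

def restrict (o : LeftOrder G) (H : Subgroup G) : LeftOrder H where
  lt a b := o.lt a b
  irrefl a := o.irrefl a
  trans a b c hab hbc := o.trans _ _ _ hab hbc
  total a b := by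
    rcases o.total (a : G) b with h | h | h
    · exact Or.inl h
    · exact Or.inr (Or.inl (Subtype.coe_injective h))
    · exact Or.inr (Or.inr h)
  mul_left a b c h := by
    simpa using o.mul_left (a : G) b c h

def conj (o : LeftOrder G) (g : G) : LeftOrder G where
  lt a b := o.lt (g * a * g⁻¹) (g * b * g⁻¹)
  irrefl a := o.irrefl _
  trans a b c hab hbc := o.trans _ _ _ hab hbc
  total a b := by
    rcases o.total (g * a * g⁻¹) (g * b * g⁻¹) with h | h | h
    · exact Or.inl h
    · exact Or.inr (Or.inl (mul_left_cancel (mul_right_cancel h)))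
    · exact Or.inr (Or.inr h)
  mul_left a b c h := by
    have key : ∀ x : G, g * (c * x) * g⁻¹ = (g * c * g⁻¹) * (g * x * g⁻¹) := by
      intro x; group
    show o.lt (g * (c * a) * g⁻¹) (g * (c * b) * g⁻¹)
    rw [key a, key b]
    exact o.mul_left _ _ _ h

def IsConvex (o : LeftOrder G) (H : Subgroup G) : Prop :=
  ∀ g h₁ h₂ : G, h₁ ∈ H → h₂ ∈ H → o.le h₁ g → o.le g h₂ → g ∈ H

def IsConradian (o : LeftOrder G) : Prop :=
  ∀ f g : G, o.lt 1 f → o.lt 1 g → o.lt g (f * (g * g))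

end LeftOrder

/-- `ρ` is a dynamical realization of the left-ordered group `(G, ⪯)`: a
faithful action of `G` on `ℝ` by orientation-preserving homeomorphisms with no
global fixed point, such that `f ≺ g ↔ f(0) < g(0)`, and the fixed-point set of
every nontrivial element has empty interior. -/
def IsDynRealization {G : Type*} [Group G] (o : LeftOrder G) (ρ : G → ℝ → ℝ) : Prop :=
  (∀ g : G, StrictMono (ρ g)) ∧
  (∀ g : G, Function.Surjective (ρ g)) ∧
  (ρ 1 = id) ∧
  (∀ g h : G, ρ (g * h) = ρ g ∘ ρ h) ∧
  (¬ ∃ x : ℝ, ∀ g : G, ρ g x = x) ∧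
  (∀ f g : G, o.lt f g ↔ ρ f 0 < ρ g 0) ∧
  (∀ g : G, g ≠ 1 → interior {x : ℝ | ρ g x = x} = ∅)

namespace ConradianFP

open Set

variable {G : Type*} [Group G]

/-- The purely order-dynamical part of a dynamical realization. -/
structure DRh {G : Type*} [Group G] (ρ : G → ℝ → ℝ) : Prop where
  mono : ∀ g : G, StrictMono (ρ g)
  surj : ∀ g : G, Function.Surjective (ρ g)
  one : ρ (1 : G) = id
  mul : ∀ g h : G, ρ (g * h) = ρ g ∘ ρ h

namespace DRh

variable {ρ : G → ℝ → ℝ} (hd : DRh ρ)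
include hd

lemma rmul (g h : G) (x : ℝ) : ρ (g * h) x = ρ g (ρ h x) := by
  rw [hd.mul]; rfl

lemma rone (x : ℝ) : ρ (1 : G) x = x := by rw [hd.one]; rfl

lemma rinv (g : G) (x : ℝ) : ρ g⁻¹ (ρ g x) = x := by
  rw [← hd.rmul, inv_mul_cancel, hd.rone]

lemma rinv' (g : G) (x : ℝ) : ρ g (ρ g⁻¹ x) = x := by
  rw [← hd.rmul, mul_inv_cancel, hd.rone]

lemma rlt_iff (g : G) {x y : ℝ} : ρ g x < ρ g y ↔ x < y := (hd.mono g).lt_iff_lt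

lemma rle_iff (g : G) {x y : ℝ} : ρ g x ≤ ρ g y ↔ x ≤ y := (hd.mono g).le_iff_le

lemma req_iff (g : G) {x y : ℝ} : ρ g x = ρ g y ↔ x = y := (hd.mono g).injective.eq_iff

noncomputable def riso (g : G) : ℝ ≃o ℝ :=
  StrictMono.orderIsoOfSurjective (ρ g) (hd.mono g) (hd.surj g)

lemma rcont (g : G) : Continuous (ρ g) := OrderIso.continuous (hd.riso g)

lemma rmap_csSup (g : G) (s : Set ℝ) (hne : s.Nonempty) (hb : BddAbove s) :
    ρ g (sSup s) = sSup (ρ g '' s) :=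
  OrderIso.map_csSup' (hd.riso g) hne hb

lemma rmap_csInf (g : G) (s : Set ℝ) (hne : s.Nonempty) (hb : BddBelow s) :
    ρ g (sInf s) = sInf (ρ g '' s) :=
  OrderIso.map_csInf' (hd.riso g) hne hb

/-- Sign dichotomy for fixed-point-free elements. -/
lemma sign_dichotomy (g : G) (hg : ∀ x, ρ g x ≠ x) :
    (∀ x, x < ρ g x) ∨ (∀ x, ρ g x < x) := by
  by_contra hcon
  push_neg at hcon
  obtain ⟨⟨x₁, hx₁⟩, ⟨x₂, hx₂⟩⟩ := hcon
  have hx₁' : ρ g x₁ < x₁ := lt_of_le_of_ne hx₁ (hg x₁)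
  have hx₂' : x₂ < ρ g x₂ := lt_of_le_of_ne hx₂ (fun h => hg x₂ h.symm)
  set φ : ℝ → ℝ := fun t => ρ g t - t with hφ
  have hφc : Continuous φ := (hd.rcont g).sub continuous_id
  have h1 : φ x₁ < 0 := by simpa [hφ, sub_neg] using hx₁'
  have h2 : 0 < φ x₂ := by simpa [hφ, sub_pos] using hx₂'
  rcases le_total x₁ x₂ with hle | hle
  · obtain ⟨t, _, ht⟩ := intermediate_value_Ioo hle hφc.continuousOn (a := x₁) (b := x₂) ⟨h1, h2⟩
    exact hg t (sub_eq_zero.mp ht)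
  · obtain ⟨t, _, ht⟩ := intermediate_value_Ioo' hle hφc.continuousOn (a := x₂) (b := x₁) ⟨h1, h2⟩
    exact hg t (sub_eq_zero.mp ht)

/-- positive powers of a pointwise-increasing element. -/
lemma pow_le (g : G) (hg : ∀ x, x < ρ g x) (n : ℕ) (x : ℝ) : x ≤ ρ (g ^ n) x := by
  induction n with
  | zero => simp [hd.rone]
  | succ n ih =>
      have : ρ (g ^ (n+1)) x = ρ g (ρ (g ^ n) x) := by
        rw [pow_succ' g n, hd.rmul]
      rw [this]
      exact le_trans ih (le_of_lt (hg _))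

lemma zpow_le (g : G) (hg : ∀ x, x < ρ g x) {k : ℤ} (hk : 0 ≤ k) (x : ℝ) :
    x ≤ ρ (g ^ k) x := by
  have : g ^ k = g ^ (k.toNat) := by rw [← zpow_natCast, Int.toNat_of_nonneg hk]
  rw [this]; exact hd.pow_le g hg _ x

/-- iterates of a fixed-point-free increasing map are unbounded above. -/
lemma pow_unbounded (g : G) (hg : ∀ x, x < ρ g x) (x c : ℝ) :
    ∃ n : ℕ, c < ρ (g ^ n) x := by
  by_contra hcon
  push_neg at hcon
  have hstep : ∀ m : ℕ, ρ (g ^ (m+1)) x = ρ g (ρ (g ^ m) x) := by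
    intro m; rw [pow_succ' g m, hd.rmul]
  set S : Set ℝ := Set.range (fun n : ℕ => ρ (g ^ n) x) with hS
  have hne : S.Nonempty := ⟨x, 0, by simp [hd.rone]⟩
  have hbdd : BddAbove S := ⟨c, by rintro y ⟨n, rfl⟩; exact hcon n⟩
  set s := sSup S with hs
  have himg : ρ g '' S = Set.range (fun n : ℕ => ρ (g ^ (n+1)) x) := by
    ext y
    constructor
    · rintro ⟨z, ⟨n, rfl⟩, rfl⟩
      exact ⟨n, by simpa using hstep n⟩
    · rintro ⟨n, rfl⟩
      exact ⟨ρ (g ^ n) x, ⟨n, rfl⟩, by simpa using (hstep n).symm⟩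
  have hbdd2 : BddAbove (Set.range (fun n : ℕ => ρ (g ^ (n+1)) x)) := by
    obtain ⟨C, hC⟩ := hbdd
    exact ⟨C, by rintro y ⟨m, rfl⟩; exact hC ⟨m+1, rfl⟩⟩
  have hfix : ρ g s = s := by
    rw [hd.rmap_csSup g S hne hbdd, himg]
    apply le_antisymm
    · refine csSup_le ⟨_, 0, rfl⟩ ?_
      rintro y ⟨n, rfl⟩
      exact le_csSup hbdd ⟨n+1, rfl⟩
    · refine csSup_le hne ?_
      rintro y ⟨n, rfl⟩
      calc ρ (g ^ n) x ≤ ρ g (ρ (g ^ n) x) := le_of_lt (hg _)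
        _ = ρ (g ^ (n+1)) x := (hstep n).symm
        _ ≤ _ := le_csSup hbdd2 ⟨n, rfl⟩
  exact absurd hfix (ne_of_gt (hg s))

/-- iterates of a fixed-point-free decreasing map are unbounded below. -/
lemma pow_unbounded_below (g : G) (hg : ∀ x, ρ g x < x) (x c : ℝ) :
    ∃ n : ℕ, ρ (g ^ n) x < c := by
  have hg' : ∀ y, y < ρ g⁻¹ y := by
    intro y
    have := hg (ρ g⁻¹ y)
    rwa [hd.rinv'] at this
  obtain ⟨n, hn⟩ := hd.pow_unbounded g⁻¹ hg' c x
  refine ⟨n, ?_⟩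
  have h2 : ρ (g ^ n) (ρ ((g⁻¹) ^ n) c) = c := by
    rw [← hd.rmul]
    simp [hd.rone]
  have := (hd.mono (g ^ n)).lt_iff_lt.2 hn
  rwa [h2] at this

end DRh

section Conradian

variable {ρ : G → ℝ → ℝ} (hd : DRh ρ) (o : LeftOrder G)
  (hord : ∀ f g : G, o.lt f g ↔ ρ f 0 < ρ g 0) (hc : o.IsConradian)
include hd hord hc

/-- The Conradian inequality holds at every point of the orbit of `0`. -/
lemma conr_pos (h u v : G) (hu : ρ h 0 < ρ u (ρ h 0)) (hv : ρ h 0 < ρ v (ρ h 0)) :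
    ρ v (ρ h 0) < ρ u (ρ v (ρ v (ρ h 0))) := by
  have hu' : o.lt h (u * h) := (hord _ _).2 (by rw [hd.rmul]; exact hu)
  have hv' : o.lt h (v * h) := (hord _ _).2 (by rw [hd.rmul]; exact hv)
  have hU : o.lt 1 (h⁻¹ * (u * h)) := by
    have := o.mul_left _ _ h⁻¹ hu'
    rwa [inv_mul_cancel] at this
  have hV : o.lt 1 (h⁻¹ * (v * h)) := by
    have := o.mul_left _ _ h⁻¹ hv'
    rwa [inv_mul_cancel] at this
  have key := o.mul_left _ _ h (hc _ _ hU hV)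
  have e1 : h * (h⁻¹ * (v * h)) = v * h := by group
  have e2 : h * (h⁻¹ * (u * h) * (h⁻¹ * (v * h) * (h⁻¹ * (v * h)))) = u * (v * (v * h)) := by
    group
  rw [e1, e2] at key
  have := (hord _ _).1 key
  simp only [hd.rmul] at this
  exact this

omit hd hord in
/-- The reverse of a Conradian order is Conradian. -/
lemma conr_neg_order (f g : G) (hf : o.lt f 1) (hg : o.lt g 1) : o.lt (f * (g * g)) g := by
  rcases o.total (f * (g * g)) g with h | h | h
  · exact h
  · exfalso
    have hfe : f = g⁻¹ := by
      have : f * (g * g) * (g * g)⁻¹ = g * (g * g)⁻¹ := by rw [h]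
      rw [mul_inv_cancel_right] at this
      rw [this]; group
    rw [hfe] at hf
    have := o.mul_left _ _ g hf
    rw [mul_inv_cancel, mul_one] at this
    exact o.irrefl 1 (o.trans _ _ _ this hg)
  · exfalso
    have hg1 : o.lt 1 g⁻¹ := by
      have := o.mul_left _ _ g⁻¹ hg
      rwa [inv_mul_cancel, mul_one] at this
    have hh : o.lt 1 (g⁻¹ * (f * (g * g))) := by
      have := o.mul_left _ _ g⁻¹ h
      rwa [inv_mul_cancel] at this
    have key := hc _ _ hh hg1
    have e : g⁻¹ * (f * (g * g)) * (g⁻¹ * g⁻¹) = g⁻¹ * f := by group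
    rw [e] at key
    have := o.mul_left _ _ g key
    rw [mul_inv_cancel_left, mul_inv_cancel] at this
    exact o.irrefl 1 (o.trans _ _ _ this hf)

/-- The reversed Conradian inequality at orbit points. -/
lemma conr_neg (h u v : G) (hu : ρ u (ρ h 0) < ρ h 0) (hv : ρ v (ρ h 0) < ρ h 0) :
    ρ u (ρ v (ρ v (ρ h 0))) < ρ v (ρ h 0) := by
  have hu' : o.lt (u * h) h := (hord _ _).2 (by rw [hd.rmul]; exact hu)
  have hv' : o.lt (v * h) h := (hord _ _).2 (by rw [hd.rmul]; exact hv)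
  have hU : o.lt (h⁻¹ * (u * h)) 1 := by
    have := o.mul_left _ _ h⁻¹ hu'
    rwa [inv_mul_cancel] at this
  have hV : o.lt (h⁻¹ * (v * h)) 1 := by
    have := o.mul_left _ _ h⁻¹ hv'
    rwa [inv_mul_cancel] at this
  have key := o.mul_left _ _ h (conr_neg_order o hc _ _ hU hV)
  have e1 : h * (h⁻¹ * (v * h)) = v * h := by group
  have e2 : h * (h⁻¹ * (u * h) * (h⁻¹ * (v * h) * (h⁻¹ * (v * h)))) = u * (v * (v * h)) := by
    group
  rw [e1, e2] at key
  have := (hord _ _).1 key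
  simp only [hd.rmul] at this
  exact this

end Conradian


namespace DRh

variable {ρ : G → ℝ → ℝ} (hd : DRh ρ)
include hd

/-- iterates of `g` starting in `[a,b)` stay in `[a,b)`. -/
lemma giter (g : G) (a b : ℝ) (hgb : ρ g b = b) (hg : ∀ x, a ≤ x → x < b → x < ρ g x)
    (z : ℝ) (hz1 : a ≤ z) (hz2 : z < b) :
    ∀ n : ℕ, a ≤ ρ (g ^ n) z ∧ ρ (g ^ n) z < b := by
  intro n
  induction n with
  | zero => simpa [hd.rone] using ⟨hz1, hz2⟩
  | succ n ih =>
      have hstep : ρ (g ^ (n+1)) z = ρ g (ρ (g ^ n) z) := by rw [pow_succ' g n, hd.rmul]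
      constructor
      · rw [hstep]
        exact le_trans ih.1 (le_of_lt (hg _ ih.1 ih.2))
      · rw [hstep]
        have := (hd.rlt_iff g).2 ih.2
        rwa [hgb] at this

/-- iterates of `g` starting in `[a,b)` reach any level below `b`. -/
lemma greach (g : G) (a b : ℝ) (hgb : ρ g b = b) (hg : ∀ x, a ≤ x → x < b → x < ρ g x)
    (z : ℝ) (hz1 : a ≤ z) (hz2 : z < b) (t : ℝ) (ht : t < b) :
    ∃ n : ℕ, t < ρ (g ^ n) z := by
  by_contra hcon
  push_neg at hcon
  have hiter := hd.giter g a b hgb hg z hz1 hz2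
  have hstep : ∀ m : ℕ, ρ (g ^ (m+1)) z = ρ g (ρ (g ^ m) z) := by
    intro m; rw [pow_succ' g m, hd.rmul]
  set S : Set ℝ := Set.range (fun n : ℕ => ρ (g ^ n) z) with hS
  have hne : S.Nonempty := ⟨ρ (g ^ 0) z, 0, rfl⟩
  have hbdd : BddAbove S := ⟨t, by rintro y ⟨n, rfl⟩; exact hcon n⟩
  set s := sSup S with hs
  have himg : ρ g '' S = Set.range (fun n : ℕ => ρ (g ^ (n+1)) z) := by
    ext y
    constructor
    · rintro ⟨w, ⟨n, rfl⟩, rfl⟩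
      exact ⟨n, by simpa using hstep n⟩
    · rintro ⟨n, rfl⟩
      exact ⟨ρ (g ^ n) z, ⟨n, rfl⟩, by simpa using (hstep n).symm⟩
  have hbdd2 : BddAbove (Set.range (fun n : ℕ => ρ (g ^ (n+1)) z)) := by
    obtain ⟨C, hC⟩ := hbdd
    exact ⟨C, by rintro y ⟨m, rfl⟩; exact hC ⟨m+1, rfl⟩⟩
  have hfix : ρ g s = s := by
    rw [hd.rmap_csSup g S hne hbdd, himg]
    apply le_antisymm
    · refine csSup_le ⟨_, 0, rfl⟩ ?_
      rintro y ⟨n, rfl⟩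
      exact le_csSup hbdd ⟨n+1, rfl⟩
    · refine csSup_le hne ?_
      rintro y ⟨n, rfl⟩
      calc ρ (g ^ n) z ≤ ρ g (ρ (g ^ n) z) := le_of_lt (hg _ (hiter n).1 (hiter n).2)
        _ = ρ (g ^ (n+1)) z := (hstep n).symm
        _ ≤ _ := le_csSup hbdd2 ⟨n, rfl⟩
  have hsa : a ≤ s := le_trans hz1 (le_csSup hbdd ⟨0, by simp [hd.rone]⟩)
  have hsb : s < b := lt_of_le_of_lt (csSup_le hne (by rintro y ⟨n, rfl⟩; exact hcon n)) ht
  exact absurd hfix (ne_of_gt (hg s hsa hsb))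

/-- basic step for the inverse map on `(a,b]`. -/
lemma finvstep (f : G) (a b : ℝ) (hfa : ρ f a = a) (hf : ∀ x, a < x → x ≤ b → x < ρ f x)
    (x : ℝ) (hx1 : a < x) (hx2 : x ≤ b) : a < ρ f⁻¹ x ∧ ρ f⁻¹ x < x := by
  set y := ρ f⁻¹ x with hy
  have hyx : ρ f y = x := hd.rinv' f x
  have hfb : b < ρ f b := hf b (lt_of_lt_of_le hx1 hx2) (le_refl b)
  have hya : a < y := by
    by_contra hcon
    push_neg at hcon
    have : ρ f y ≤ ρ f a := (hd.rle_iff f).2 hcon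
    rw [hyx, hfa] at this
    exact absurd this (not_le.2 hx1)
  have hyb : y ≤ b := by
    by_contra hcon
    push_neg at hcon
    have : ρ f b < ρ f y := (hd.rlt_iff f).2 hcon
    rw [hyx] at this
    have : b < x := lt_trans hfb this
    exact absurd this (not_lt.2 hx2)
  have := hf y hya hyb
  rw [hyx] at this
  exact ⟨hya, this⟩

lemma finviter (f : G) (a b : ℝ) (hfa : ρ f a = a) (hf : ∀ x, a < x → x ≤ b → x < ρ f x)
    (z : ℝ) (hz1 : a < z) (hz2 : z ≤ b) :
    ∀ n : ℕ, a < ρ ((f⁻¹) ^ n) z ∧ ρ ((f⁻¹) ^ n) z ≤ z := by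
  intro n
  induction n with
  | zero =>
      rw [pow_zero, hd.one]
      exact ⟨hz1, le_refl z⟩
  | succ n ih =>
      have hstep : ρ ((f⁻¹) ^ (n+1)) z = ρ f⁻¹ (ρ ((f⁻¹) ^ n) z) := by
        rw [pow_succ' f⁻¹ n, hd.rmul]
      have hcur := hd.finvstep f a b hfa hf (ρ ((f⁻¹) ^ n) z) ih.1 (le_trans ih.2 hz2)
      constructor
      · rw [hstep]; exact hcur.1
      · rw [hstep]; exact le_trans (le_of_lt hcur.2) ih.2

lemma finvinf (f : G) (a b : ℝ) (hfa : ρ f a = a) (hf : ∀ x, a < x → x ≤ b → x < ρ f x)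
    (z : ℝ) (hz1 : a < z) (hz2 : z ≤ b) :
    sInf (Set.range (fun n : ℕ => ρ ((f⁻¹) ^ n) z)) = a := by
  have hiter := hd.finviter f a b hfa hf z hz1 hz2
  have hstep : ∀ m : ℕ, ρ ((f⁻¹) ^ (m+1)) z = ρ f⁻¹ (ρ ((f⁻¹) ^ m) z) := by
    intro m; rw [pow_succ' f⁻¹ m, hd.rmul]
  set S : Set ℝ := Set.range (fun n : ℕ => ρ ((f⁻¹) ^ n) z) with hS
  have hne : S.Nonempty := ⟨ρ ((f⁻¹) ^ 0) z, 0, rfl⟩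
  have hbdd : BddBelow S := ⟨a, by rintro y ⟨n, rfl⟩; exact le_of_lt (hiter n).1⟩
  set s := sInf S with hs
  have himg : ρ f⁻¹ '' S = Set.range (fun n : ℕ => ρ ((f⁻¹) ^ (n+1)) z) := by
    ext y
    constructor
    · rintro ⟨w, ⟨n, rfl⟩, rfl⟩
      exact ⟨n, by simpa using hstep n⟩
    · rintro ⟨n, rfl⟩
      exact ⟨ρ ((f⁻¹) ^ n) z, ⟨n, rfl⟩, by simpa using (hstep n).symm⟩
  have hbdd2 : BddBelow (Set.range (fun n : ℕ => ρ ((f⁻¹) ^ (n+1)) z)) := by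
    obtain ⟨C, hC⟩ := hbdd
    exact ⟨C, by rintro y ⟨m, rfl⟩; exact hC ⟨m+1, rfl⟩⟩
  have hfix : ρ f⁻¹ s = s := by
    rw [hd.rmap_csInf f⁻¹ S hne hbdd, himg]
    apply le_antisymm
    · refine le_csInf hne ?_
      rintro y ⟨n, rfl⟩
      calc sInf (Set.range (fun n : ℕ => ρ ((f⁻¹) ^ (n+1)) z))
          ≤ ρ ((f⁻¹) ^ (n+1)) z := csInf_le hbdd2 ⟨n, rfl⟩
        _ = ρ f⁻¹ (ρ ((f⁻¹) ^ n) z) := hstep n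
        _ ≤ ρ ((f⁻¹) ^ n) z :=
            le_of_lt (hd.finvstep f a b hfa hf _ (hiter n).1 (le_trans (hiter n).2 hz2)).2
    · refine le_csInf ⟨_, 0, rfl⟩ ?_
      rintro y ⟨n, rfl⟩
      exact csInf_le hbdd ⟨n+1, rfl⟩
  have hsa : a ≤ s := le_csInf hne (by rintro y ⟨n, rfl⟩; exact le_of_lt (hiter n).1)
  by_contra hcon
  have hsa' : a < s := lt_of_le_of_ne hsa (fun h => hcon h.symm)
  have hsz : s ≤ z := csInf_le hbdd ⟨0, by simp [hd.rone]⟩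
  have hffix : ρ f s = s := by
    have := congrArg (ρ f) hfix
    rw [hd.rinv'] at this
    exact this.symm
  exact absurd hffix (ne_of_gt (hf s hsa' (le_trans hsz hz2)))

end DRh


section NoCrossing

variable {ρ : G → ℝ → ℝ} (hd : DRh ρ) (o : LeftOrder G)
  (hord : ∀ f g : G, o.lt f g ↔ ρ f 0 < ρ g 0) (hc : o.IsConradian)
  (horb : ∀ c : ℝ, ∃ h : G, c < ρ h 0)
include hd hord hc horb

lemma no_crossing (f g : G) (a b : ℝ) (hab : a < b)
    (hfa : ρ f a = a) (hf : ∀ x, a < x → x ≤ b → x < ρ f x)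
    (hgb : ρ g b = b) (hg : ∀ x, a ≤ x → x < b → x < ρ g x)
    (hfg : ∀ x, x < ρ f (ρ g x)) : False := by
  have hfb : b < ρ f b := hf b hab (le_refl b)
  have hga : a < ρ g a := hg a (le_refl a) hab
  set d₁ := ρ f⁻¹ b with hd₁
  have hfd₁ : ρ f d₁ = b := hd.rinv' f b
  have hd₁ab : a < d₁ ∧ d₁ < b := hd.finvstep f a b hfa hf b hab (le_refl b)
  set e₁ := ρ g a with he₁
  have he₁a : a < e₁ := hga
  have he₁b : e₁ < b := by
    have := (hd.rlt_iff g).2 hab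
    rwa [hgb] at this
  -- Case A: there is no orbit point in (a, d₁)
  have hA : ¬ ∃ z : ℝ, (∃ h : G, ρ h 0 = z) ∧ a < z ∧ z < d₁ := by
    rintro ⟨y₀, hy₀o, hy₀1, hy₀2⟩
    by_cases hS : ∃ z : ℝ, ((∃ h : G, ρ h 0 = z) ∧ a < z ∧ z < d₁) ∧ d₁ ≤ ρ g z
    · obtain ⟨z, ⟨⟨h, hh⟩, hz1, hz2⟩, hz3⟩ := hS
      have hzb : z < b := lt_trans hz2 hd₁ab.2
      have hfzb : ρ f z < b := by
        have := (hd.rlt_iff f).2 hz2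
        rwa [hfd₁] at this
      obtain ⟨k, hk⟩ := hd.greach g a b hgb hg z (le_of_lt hz1) hzb (ρ f z) hfzb
      have hu : z < ρ (f⁻¹ * g ^ k) z := by
        rw [hd.rmul]
        have := (hd.rlt_iff f⁻¹).2 hk
        rwa [hd.rinv] at this
      have hv : z < ρ g z := hg z (le_of_lt hz1) hzb
      subst hh
      have key := conr_pos hd o hord hc h (f⁻¹ * g ^ k) g hu hv
      have e : ρ (f⁻¹ * g ^ k) (ρ g (ρ g (ρ h 0))) = ρ f⁻¹ (ρ (g ^ (k + 2)) (ρ h 0)) := by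
        simp only [← hd.rmul]
        congr 1
        group
      rw [e] at key
      have hlt : ρ f⁻¹ (ρ (g ^ (k + 2)) (ρ h 0)) < d₁ :=
        (hd.rlt_iff f⁻¹).2 (hd.giter g a b hgb hg (ρ h 0) (le_of_lt hz1) hzb (k + 2)).2
      have : d₁ ≤ ρ g (ρ h 0) := hz3
      linarith
    · push_neg at hS
      set S : Set ℝ := {x : ℝ | (∃ h : G, ρ h 0 = x) ∧ a < x ∧ x < d₁} with hSdef
      have hne : S.Nonempty := ⟨y₀, hy₀o, hy₀1, hy₀2⟩
      have hbdd : BddAbove S := ⟨d₁, by rintro y hy; exact le_of_lt hy.2.2⟩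
      have hSg : ∀ x ∈ S, ρ g x ∈ S := by
        rintro x ⟨⟨h, hh⟩, hx1, hx2⟩
        refine ⟨⟨g * h, by rw [hd.rmul, hh]⟩, ?_, ?_⟩
        · exact lt_trans hx1 (hg x (le_of_lt hx1) (lt_trans hx2 hd₁ab.2))
        · exact hS x ⟨⟨h, hh⟩, hx1, hx2⟩
      set s := sSup S with hs
      have himg : ∀ y ∈ ρ g '' S, y ≤ s := by
        rintro y ⟨x, hx, rfl⟩
        exact le_csSup hbdd (hSg x hx)
      have hgs : ρ g s = s := by
        rw [hd.rmap_csSup g S hne hbdd]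
        apply le_antisymm
        · exact csSup_le (hne.image _) himg
        · refine csSup_le hne ?_
          intro x hx
          calc x ≤ ρ g x := le_of_lt (hg x (le_of_lt hx.2.1) (lt_trans hx.2.2 hd₁ab.2))
            _ ≤ _ := le_csSup (⟨s, himg⟩) ⟨x, hx, rfl⟩
      have hsa : a < s := lt_of_lt_of_le hy₀1 (le_csSup hbdd ⟨hy₀o, hy₀1, hy₀2⟩)
      have hsb : s < b :=
        lt_of_le_of_lt (csSup_le hne (fun x hx => le_of_lt hx.2.2)) hd₁ab.2
      exact absurd hgs (ne_of_gt (hg s (le_of_lt hsa) hsb))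
  -- Case A': there is no orbit point in (e₁, b)
  have hA' : ¬ ∃ z : ℝ, (∃ h : G, ρ h 0 = z) ∧ e₁ < z ∧ z < b := by
    rintro ⟨y₀, hy₀o, hy₀1, hy₀2⟩
    by_cases hS : ∃ z : ℝ, ((∃ h : G, ρ h 0 = z) ∧ e₁ < z ∧ z < b) ∧ ρ f⁻¹ z ≤ e₁
    · obtain ⟨z, ⟨⟨h, hh⟩, hz1, hz2⟩, hz3⟩ := hS
      have hza : a < z := lt_trans he₁a hz1
      set R : Set ℝ := Set.range (fun n : ℕ => ρ ((f⁻¹) ^ n) z) with hR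
      have hiter := hd.finviter f a b hfa hf z hza (le_of_lt hz2)
      have hRne : R.Nonempty := ⟨ρ ((f⁻¹) ^ 0) z, 0, rfl⟩
      have hRbdd : BddBelow R := ⟨a, by rintro y ⟨n, rfl⟩; exact le_of_lt (hiter n).1⟩
      have hinf : sInf R = a := hd.finvinf f a b hfa hf z hza (le_of_lt hz2)
      have himgne : (ρ g '' R).Nonempty := hRne.image _
      have hinfim : sInf (ρ g '' R) < z := by
        rw [← hd.rmap_csInf g R hRne hRbdd, hinf]
        exact hz1
      obtain ⟨w, ⟨y, ⟨n, hy⟩, hw⟩, hwz⟩ := exists_lt_of_csInf_lt himgne hinfim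
      -- hw : ρ g y = w, hy : ρ ((f⁻¹)^n) z = y
      have hn : ρ g (ρ ((f⁻¹) ^ n) z) < z := by
        rw [show (fun n : ℕ => ρ ((f⁻¹) ^ n) z) n = ρ ((f⁻¹) ^ n) z from rfl] at hy
        rw [hy, hw]
        exact hwz
      have hu : ρ (g * (f⁻¹) ^ n) z < z := by rw [hd.rmul]; exact hn
      have hv : ρ f⁻¹ z < z := (hd.finvstep f a b hfa hf z hza (le_of_lt hz2)).2
      subst hh
      have key := conr_neg hd o hord hc h (g * (f⁻¹) ^ n) f⁻¹ hu hv
      have e : ρ (g * (f⁻¹) ^ n) (ρ f⁻¹ (ρ f⁻¹ (ρ h 0))) = ρ g (ρ ((f⁻¹) ^ (n + 2)) (ρ h 0)) := by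
        simp only [← hd.rmul]
        congr 1
        group
      rw [e] at key
      have hgt : e₁ < ρ g (ρ ((f⁻¹) ^ (n + 2)) (ρ h 0)) :=
        (hd.rlt_iff g).2 (hiter (n + 2)).1
      linarith
    · push_neg at hS
      set S : Set ℝ := {x : ℝ | (∃ h : G, ρ h 0 = x) ∧ e₁ < x ∧ x < b} with hSdef
      have hne : S.Nonempty := ⟨y₀, hy₀o, hy₀1, hy₀2⟩
      have hbdd : BddBelow S := ⟨e₁, by rintro y hy; exact le_of_lt hy.2.1⟩
      have hSf : ∀ x ∈ S, ρ f⁻¹ x ∈ S := by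
        rintro x ⟨⟨h, hh⟩, hx1, hx2⟩
        have hxa : a < x := lt_trans he₁a hx1
        have hstep := hd.finvstep f a b hfa hf x hxa (le_of_lt hx2)
        refine ⟨⟨f⁻¹ * h, by rw [hd.rmul, hh]⟩, ?_, lt_trans hstep.2 hx2⟩
        exact hS x ⟨⟨h, hh⟩, hx1, hx2⟩
      set s := sInf S with hs
      have himg : ∀ y ∈ ρ f⁻¹ '' S, s ≤ y := by
        rintro y ⟨x, hx, rfl⟩
        exact csInf_le hbdd (hSf x hx)
      have hfs : ρ f⁻¹ s = s := by
        rw [hd.rmap_csInf f⁻¹ S hne hbdd]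
        apply le_antisymm
        · refine le_csInf hne ?_
          intro x hx
          have hxa : a < x := lt_trans he₁a hx.2.1
          calc sInf (ρ f⁻¹ '' S) ≤ ρ f⁻¹ x := csInf_le ⟨s, himg⟩ ⟨x, hx, rfl⟩
            _ ≤ x := le_of_lt (hd.finvstep f a b hfa hf x hxa (le_of_lt hx.2.2)).2
        · exact le_csInf (hne.image _) himg
      have hse : e₁ ≤ s := le_csInf hne (fun x hx => le_of_lt hx.2.1)
      have hsa : a < s := lt_of_lt_of_le he₁a hse
      have hsb : s < b := lt_of_le_of_lt (csInf_le hbdd ⟨hy₀o, hy₀1, hy₀2⟩) hy₀2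
      have hffix : ρ f s = s := by
        have := congrArg (ρ f) hfs
        rw [hd.rinv'] at this
        exact this.symm
      exact absurd hffix (ne_of_gt (hf s hsa (le_of_lt hsb)))
  -- no orbit point in (a, b) at all
  have hAB : ¬ ∃ z : ℝ, (∃ h : G, ρ h 0 = z) ∧ a < z ∧ z < b := by
    rintro ⟨z, ⟨h, hh⟩, hz1, hz2⟩
    obtain ⟨n, hn⟩ := hd.greach g a b hgb hg z (le_of_lt hz1) hz2 e₁ he₁b
    exact hA' ⟨ρ (g ^ n) z, ⟨g ^ n * h, by rw [hd.rmul, hh]⟩, hn,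
      (hd.giter g a b hgb hg z (le_of_lt hz1) hz2 n).2⟩
  -- Case B: common fixed point above b
  obtain ⟨h₀, hh₀⟩ := horb b
  set E : Set ℝ := {x : ℝ | (∃ h : G, ρ h 0 = x) ∧ b ≤ x} with hE
  have hEne : E.Nonempty := ⟨ρ h₀ 0, ⟨h₀, rfl⟩, le_of_lt hh₀⟩
  have hEbdd : BddBelow E := ⟨b, fun x hx => hx.2⟩
  set q := sInf E with hq
  have hqb : b ≤ q := le_csInf hEne (fun x hx => hx.2)
  have hmem : ∀ u : G, (∀ x, x ∈ E → ρ u x ∈ E) → q ≤ ρ u q := by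
    intro u hu
    rw [hd.rmap_csInf u E hEne hEbdd]
    refine le_csInf (hEne.image _) ?_
    rintro y ⟨x, hx, rfl⟩
    exact csInf_le hEbdd (hu x hx)
  have hmf : ∀ x, x ∈ E → ρ f x ∈ E := by
    rintro x ⟨⟨h, hh⟩, hbx⟩
    refine ⟨⟨f * h, by rw [hd.rmul, hh]⟩, ?_⟩
    calc b ≤ ρ f b := le_of_lt hfb
      _ ≤ ρ f x := (hd.rle_iff f).2 hbx
  have hmfinv : ∀ x, x ∈ E → ρ f⁻¹ x ∈ E := by
    rintro x ⟨⟨h, hh⟩, hbx⟩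
    have h1 : d₁ ≤ ρ f⁻¹ x := by
      have := (hd.rle_iff f⁻¹).2 hbx
      exact this
    have h2 : a < ρ f⁻¹ x := lt_of_lt_of_le hd₁ab.1 h1
    have horbx : ∃ h' : G, ρ h' 0 = ρ f⁻¹ x := ⟨f⁻¹ * h, by rw [hd.rmul, hh]⟩
    refine ⟨horbx, ?_⟩
    by_contra hcon
    push_neg at hcon
    exact hAB ⟨ρ f⁻¹ x, horbx, h2, hcon⟩
  have hmg : ∀ x, x ∈ E → ρ g x ∈ E := by
    rintro x ⟨⟨h, hh⟩, hbx⟩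
    refine ⟨⟨g * h, by rw [hd.rmul, hh]⟩, ?_⟩
    have := (hd.rle_iff g).2 hbx
    rwa [hgb] at this
  have hmginv : ∀ x, x ∈ E → ρ g⁻¹ x ∈ E := by
    rintro x ⟨⟨h, hh⟩, hbx⟩
    refine ⟨⟨g⁻¹ * h, by rw [hd.rmul, hh]⟩, ?_⟩
    have hb' : ρ g⁻¹ b = b := by
      have := congrArg (ρ g⁻¹) hgb
      rw [hd.rinv] at this
      exact this.symm
    have := (hd.rle_iff g⁻¹).2 hbx
    rwa [hb'] at this
  have hqf : ρ f q = q := by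
    apply le_antisymm
    · have := hmem f⁻¹ hmfinv
      have := (hd.rle_iff f).2 this
      rwa [hd.rinv'] at this
    · exact hmem f hmf
  have hqg : ρ g q = q := by
    apply le_antisymm
    · have := hmem g⁻¹ hmginv
      have := (hd.rle_iff g).2 this
      rwa [hd.rinv'] at this
    · exact hmem g hmg
  have := hfg q
  rw [hqg, hqf] at this
  exact lt_irrefl q this

end NoCrossing


section Closure

variable {ρ : G → ℝ → ℝ} (hd : DRh ρ) (o : LeftOrder G)
  (hord : ∀ f g : G, o.lt f g ↔ ρ f 0 < ρ g 0) (hc : o.IsConradian)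
  (horb : ∀ c : ℝ, ∃ h : G, c < ρ h 0)
include hd

lemma inv_fixed (g : G) (x : ℝ) (hx : ρ g x = x) : ρ g⁻¹ x = x := by
  have := congrArg (ρ g⁻¹) hx
  rw [hd.rinv] at this
  exact this.symm

include hord hc horb in
lemma build_crossing (f g : G) (hfg : ∀ x, x < ρ f (ρ g x))
    (a₀ : ℝ) (ha₀ : ρ f a₀ = a₀) (b₀ : ℝ) (hb₀ : ρ g b₀ = b₀) (hab₀ : a₀ < b₀) : False := by
  have hfixg : ∀ x, ρ g x = x → x < ρ f x := by
    intro x hx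
    have := hfg x
    rwa [hx] at this
  have hfixf : ∀ x, ρ f x = x → x < ρ g x := by
    intro x hx
    by_contra hcon
    push_neg at hcon
    have h2 := (hd.rle_iff f).2 hcon
    rw [hx] at h2
    exact absurd (hfg x) (not_lt.2 h2)
  have hcg : Continuous fun t => ρ g t - t := (hd.rcont g).sub continuous_id
  have hcf : Continuous fun t => ρ f t - t := (hd.rcont f).sub continuous_id
  -- the smallest fixed point of g above a₀
  set Bset : Set ℝ := {x : ℝ | ρ g x = x} ∩ Set.Ici a₀ with hBset
  have hBclosed : IsClosed Bset :=
    (isClosed_eq (hd.rcont g) continuous_id).inter isClosed_Ici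
  have hBne : Bset.Nonempty := ⟨b₀, hb₀, le_of_lt hab₀⟩
  have hBbdd : BddBelow Bset := ⟨a₀, fun x hx => hx.2⟩
  set b := sInf Bset with hb
  have hbmem : b ∈ Bset := hBclosed.csInf_mem hBne hBbdd
  have hgbb : ρ g b = b := hbmem.1
  have ha₀b : a₀ < b := by
    rcases lt_or_eq_of_le (show a₀ ≤ b from hbmem.2) with h | h
    · exact h
    · exact absurd hgbb (by rw [← h]; exact ne_of_gt (hfixf a₀ ha₀))
  have hgsign : ∀ x, a₀ ≤ x → x < b → x < ρ g x := by
    intro x hx1 hx2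
    by_contra hcon
    push_neg at hcon
    have hne' : ρ g x ≠ x := by
      intro h
      exact absurd hx2 (not_lt.2 (csInf_le hBbdd ⟨h, hx1⟩))
    have hlt : ρ g x < x := lt_of_le_of_ne hcon hne'
    have hax : a₀ < x := by
      rcases lt_or_eq_of_le hx1 with h | h
      · exact h
      · exact absurd hlt (not_lt.2 (le_of_lt (by rw [← h]; exact hfixf a₀ ha₀)))
    have h0mem : (0 : ℝ) ∈ Set.Ioo (ρ g x - x) (ρ g a₀ - a₀) :=
      ⟨by simpa [sub_neg] using hlt, by simpa [sub_pos] using hfixf a₀ ha₀⟩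
    obtain ⟨t, ht, htz⟩ := intermediate_value_Ioo' (le_of_lt hax) hcg.continuousOn h0mem
    have htfix : ρ g t = t := by
      have : ρ g t - t = 0 := htz
      linarith
    exact absurd (csInf_le hBbdd ⟨htfix, le_of_lt ht.1⟩) (not_le.2 (lt_trans ht.2 hx2))
  -- the largest fixed point of f below b
  set Aset : Set ℝ := {x : ℝ | ρ f x = x} ∩ Set.Iic b with hAset
  have hAclosed : IsClosed Aset :=
    (isClosed_eq (hd.rcont f) continuous_id).inter isClosed_Iic
  have hAne : Aset.Nonempty := ⟨a₀, ha₀, le_of_lt ha₀b⟩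
  have hAbdd : BddAbove Aset := ⟨b, fun x hx => hx.2⟩
  set a := sSup Aset with ha
  have hamem : a ∈ Aset := hAclosed.csSup_mem hAne hAbdd
  have hfaa : ρ f a = a := hamem.1
  have ha₀a : a₀ ≤ a := le_csSup hAbdd ⟨ha₀, le_of_lt ha₀b⟩
  have hab : a < b := by
    rcases lt_or_eq_of_le (show a ≤ b from hamem.2) with h | h
    · exact h
    · rw [h] at hfaa
      exact absurd hfaa (ne_of_gt (hfixg b hgbb))
  have hfsign : ∀ x, a < x → x ≤ b → x < ρ f x := by
    intro x hx1 hx2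
    by_contra hcon
    push_neg at hcon
    have hne' : ρ f x ≠ x := by
      intro h
      exact absurd hx1 (not_lt.2 (le_csSup hAbdd ⟨h, hx2⟩))
    have hlt : ρ f x < x := lt_of_le_of_ne hcon hne'
    have hxb : x < b := by
      rcases lt_or_eq_of_le hx2 with h | h
      · exact h
      · exact absurd hlt (not_lt.2 (le_of_lt (by rw [h]; exact hfixg b hgbb)))
    have h0mem : (0 : ℝ) ∈ Set.Ioo (ρ f x - x) (ρ f b - b) :=
      ⟨by simpa [sub_neg] using hlt, by simpa [sub_pos] using hfixg b hgbb⟩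
    obtain ⟨t, ht, htz⟩ := intermediate_value_Ioo (le_of_lt hxb) hcf.continuousOn h0mem
    have htfix : ρ f t = t := by
      have : ρ f t - t = 0 := htz
      linarith
    exact absurd (le_csSup hAbdd ⟨htfix, le_of_lt ht.2⟩) (not_le.2 (lt_trans hx1 ht.1))
  exact no_crossing hd o hord hc horb f g a b hab hfaa hfsign hgbb
    (fun x hx1 hx2 => hgsign x (le_trans ha₀a hx1) hx2) hfg

include hord hc horb in
lemma aux_noP (f g : G) (hfix_f : ∃ x, ρ f x = x) (hfix_g : ∃ x, ρ g x = x)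
    (hfg : ∀ x, x < ρ f (ρ g x)) : False := by
  obtain ⟨a₀, ha₀⟩ := hfix_f
  obtain ⟨b₀, hb₀⟩ := hfix_g
  rcases lt_trichotomy a₀ b₀ with h | h | h
  · exact build_crossing hd o hord hc horb f g hfg a₀ ha₀ b₀ hb₀ h
  · subst h
    have h1 : a₀ < ρ f (ρ g a₀) := hfg a₀
    rw [hb₀, ha₀] at h1
    exact lt_irrefl a₀ h1
  · have hgf : ∀ x, x < ρ g (ρ f x) := by
      intro x
      have h2 := hfg (ρ f x)
      exact (hd.rlt_iff f).1 h2
    exact build_crossing hd o hord hc horb g f hgf b₀ hb₀ a₀ ha₀ h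

include hord hc horb in
lemma mul_fixed (f g : G) (hfix_f : ∃ x, ρ f x = x) (hfix_g : ∃ x, ρ g x = x) :
    ∃ x, ρ (f * g) x = x := by
  by_contra hno
  push_neg at hno
  rcases hd.sign_dichotomy (f * g) hno with hpos | hneg
  · refine aux_noP hd o hord hc horb f g hfix_f hfix_g ?_
    intro x
    have := hpos x
    rwa [hd.rmul] at this
  · have hpos' : ∀ x, x < ρ g⁻¹ (ρ f⁻¹ x) := by
      intro x
      have h1 : ρ (f * g) (ρ g⁻¹ (ρ f⁻¹ x)) = x := by
        simp only [← hd.rmul]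
        have e : f * g * (g⁻¹ * f⁻¹) = 1 := by group
        rw [e, hd.rone]
      have := hneg (ρ g⁻¹ (ρ f⁻¹ x))
      rwa [h1] at this
    obtain ⟨x₁, hx₁⟩ := hfix_g
    obtain ⟨x₂, hx₂⟩ := hfix_f
    exact aux_noP hd o hord hc horb g⁻¹ f⁻¹ ⟨x₁, inv_fixed hd g x₁ hx₁⟩
      ⟨x₂, inv_fixed hd f x₂ hx₂⟩ hpos'

end Closure


section Orbit

variable {ρ : G → ℝ → ℝ} (hd : DRh ρ)
include hd

lemma orb_above (hnofix : ¬ ∃ x : ℝ, ∀ g : G, ρ g x = x) :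
    ∀ c : ℝ, ∃ h : G, c < ρ h 0 := by
  by_contra hcon
  push_neg at hcon
  obtain ⟨c, hc⟩ := hcon
  set S : Set ℝ := Set.range (fun h : G => ρ h 0) with hS
  have hne : S.Nonempty := ⟨ρ 1 0, 1, rfl⟩
  have hbdd : BddAbove S := ⟨c, by rintro y ⟨h, rfl⟩; exact hc h⟩
  set s := sSup S with hs
  refine hnofix ⟨s, fun u => ?_⟩
  have himg : ρ u '' S = S := by
    ext y
    constructor
    · rintro ⟨w, ⟨h, rfl⟩, rfl⟩
      exact ⟨u * h, by simpa using hd.rmul u h 0⟩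
    · rintro ⟨h, rfl⟩
      refine ⟨ρ (u⁻¹ * h) 0, ⟨u⁻¹ * h, rfl⟩, ?_⟩
      rw [← hd.rmul]
      have e : u * (u⁻¹ * h) = h := by group
      rw [e]
  rw [hd.rmap_csSup u S hne hbdd, himg]

end Orbit

section Holder

variable {ρ : G → ℝ → ℝ} (hd : DRh ρ) (lam : ℝ)
  (hgt : ∀ w : G, lam < ρ w lam → ∀ x, x < ρ w x)
  (hlt : ∀ w : G, ρ w lam < lam → ∀ x, ρ w x < x)
  (hfixt : ∀ w : G, ρ w lam = lam → ∀ u : G, ρ w (ρ u lam) = ρ u lam)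
include hd hgt

lemma euclid_step (P Q : G) (hQ : lam < ρ Q lam) (hQP : ρ Q lam ≤ ρ P lam) :
    ∃ k : ℤ, 1 ≤ k ∧ ρ (Q ^ k) lam ≤ ρ P lam ∧ ρ P lam < ρ (Q ^ (k + 1)) lam := by
  have hQpos : ∀ x, x < ρ Q x := hgt Q hQ
  have hmonoexp : ∀ i j : ℤ, i ≤ j → ρ (Q ^ i) lam ≤ ρ (Q ^ j) lam := by
    intro i j hij
    have e : (Q : G) ^ j = Q ^ (j - i) * Q ^ i := by rw [← zpow_add]; ring_nf
    rw [e, hd.rmul]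
    exact hd.zpow_le Q hQpos (k := j - i) (by omega) _
  have hbddA : ∃ bnd : ℤ, ∀ z : ℤ, ρ (Q ^ z) lam ≤ ρ P lam → z ≤ bnd := by
    obtain ⟨n, hn⟩ := hd.pow_unbounded Q hQpos lam (ρ P lam)
    refine ⟨(n : ℤ), ?_⟩
    intro z hz
    by_contra hzgt
    push_neg at hzgt
    have h1 : ρ (Q ^ (n : ℤ)) lam ≤ ρ (Q ^ z) lam := hmonoexp _ _ (le_of_lt hzgt)
    rw [zpow_natCast] at h1
    linarith
  obtain ⟨k, hk, hmax⟩ := Int.exists_greatest_of_bdd hbddA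
    ⟨1, by rwa [zpow_one]⟩
  refine ⟨k, hmax 1 (by rwa [zpow_one]), hk, ?_⟩
  by_contra hcon
  push_neg at hcon
  have := hmax (k + 1) hcon
  omega

include hlt hfixt in
lemma holder_core (P Q d : G) (hQ : lam < ρ Q lam) (hQP : ρ Q lam ≤ ρ P lam)
    (hcomm : P⁻¹ * Q⁻¹ * P * Q = d⁻¹) (hdfix : ρ d lam = lam → False) :
    ∃ Q' : G, lam < ρ Q' lam ∧ ρ Q' lam < ρ Q lam ∧ Q⁻¹ * Q'⁻¹ * Q * Q' = d ∧
      ρ d lam ≤ ρ Q' lam ∧ ρ Q (ρ Q' lam) ≤ ρ P lam := by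
  have hQpos : ∀ x, x < ρ Q x := hgt Q hQ
  obtain ⟨k, hk1, hkle, hklt⟩ := euclid_step hd lam hgt P Q hQ hQP
  set Q' : G := Q ^ (-k) * P with hQ'def
  have hQ'lam : ρ Q' lam = ρ (Q ^ (-k)) (ρ P lam) := hd.rmul _ _ _
  have hQ'ge : lam ≤ ρ Q' lam := by
    have h1 : ρ (Q ^ (-k)) (ρ (Q ^ k) lam) = lam := by
      rw [← hd.rmul]
      have e : (Q : G) ^ (-k) * Q ^ k = 1 := by group
      rw [e, hd.rone]
    have h2 := (hd.rle_iff (Q ^ (-k))).2 hkle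
    rw [h1] at h2
    rw [hQ'lam]
    exact h2
  have hQ'lt : ρ Q' lam < ρ Q lam := by
    have h2 := (hd.rlt_iff (Q ^ (-k))).2 hklt
    have h3 : ρ (Q ^ (-k)) (ρ (Q ^ (k + 1)) lam) = ρ Q lam := by
      rw [← hd.rmul]
      have e : (Q : G) ^ (-k) * Q ^ (k + 1) = Q := by group
      rw [e]
    rw [h3] at h2
    rw [hQ'lam]
    exact h2
  have hcomm2 : Q⁻¹ * Q'⁻¹ * Q * Q' = d := by
    have e : Q⁻¹ * (Q ^ (-k) * P)⁻¹ * Q * (Q ^ (-k) * P) = (P⁻¹ * Q⁻¹ * P * Q)⁻¹ := by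
      group
    rw [hQ'def, e, hcomm, inv_inv]
  have hdexp : ρ d lam = ρ Q⁻¹ (ρ Q'⁻¹ (ρ Q (ρ Q' lam))) := by
    rw [← hcomm2]
    simp only [hd.rmul]
  rcases lt_or_eq_of_le hQ'ge with hQ'gt | hQ'eq
  · -- main case
    have hQ'invneg : ρ Q'⁻¹ lam < lam := by
      have := (hd.rlt_iff Q'⁻¹).2 hQ'gt
      rwa [hd.rinv] at this
    have hble : ρ d lam ≤ ρ Q' lam := by
      have hQ'inv_le : ρ Q'⁻¹ (ρ Q (ρ Q' lam)) ≤ ρ Q (ρ Q' lam) :=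
        le_of_lt (hlt Q'⁻¹ hQ'invneg _)
      calc ρ d lam = ρ Q⁻¹ (ρ Q'⁻¹ (ρ Q (ρ Q' lam))) := hdexp
        _ ≤ ρ Q⁻¹ (ρ Q (ρ Q' lam)) := (hd.rle_iff Q⁻¹).2 hQ'inv_le
        _ = ρ Q' lam := by rw [hd.rinv]
    have hQle : ρ Q (ρ Q' lam) ≤ ρ P lam := by
      have hPdecomp : ρ P lam = ρ (Q ^ k) (ρ Q' lam) := by
        rw [hQ'def, ← hd.rmul]
        have e : (Q : G) ^ k * (Q ^ (-k) * P) = P := by group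
        rw [e]
      have hQk : ρ Q (ρ Q' lam) ≤ ρ (Q ^ k) (ρ Q' lam) := by
        have e2 : ρ (Q ^ k) (ρ Q' lam) = ρ (Q ^ (k - 1)) (ρ Q (ρ Q' lam)) := by
          rw [← hd.rmul (Q ^ (k - 1)) Q]
          congr 1
          group
        rw [e2]
        exact hd.zpow_le Q hQpos (k := k - 1) (by omega) _
      rw [hPdecomp]
      exact hQk
    exact ⟨Q', hQ'gt, hQ'lt, hcomm2, hble, hQle⟩
  · -- the remainder fixes lam : contradiction
    exfalso
    have hfixQ' : ρ Q' lam = lam := hQ'eq.symm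
    have h4 : ρ Q'⁻¹ (ρ Q lam) = ρ Q lam := by
      have h5 := hfixt Q' hfixQ' Q
      have h6 := congrArg (ρ Q'⁻¹) h5
      rw [hd.rinv] at h6
      exact h6.symm
    apply hdfix
    rw [hdexp, hfixQ', h4, hd.rinv]

include hlt hfixt in
lemma holder_claim (c : G) (hclam : lam < ρ c lam) :
    ∀ m : ℕ, ∀ P Q : G, lam < ρ Q lam → ρ Q lam ≤ ρ P lam →
      P⁻¹ * Q⁻¹ * P * Q = c⁻¹ → ρ (c ^ (m + 1)) lam ≤ ρ P lam := by
  have hcfix : ρ c lam = lam → False := fun h => absurd hclam (by rw [h]; exact lt_irrefl lam)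
  have hcinvfix : ρ c⁻¹ lam = lam → False := by
    intro h
    apply hcfix
    have := congrArg (ρ c) h
    rw [hd.rinv'] at this
    exact this.symm
  intro m
  induction m with
  | zero =>
      intro P Q hQ hQP hcomm
      obtain ⟨Q', hQ'gt, hQ'lt, hcomm2, hble, hQle⟩ :=
        holder_core hd lam hgt hlt hfixt P Q c hQ hQP hcomm hcfix
      rw [pow_one]
      have : ρ Q (ρ Q' lam) ≥ ρ Q lam := by
        have := (hd.rle_iff Q).2 (le_of_lt hQ'gt)
        linarith [this]
      linarith
  | succ m ih =>
      intro P Q hQ hQP hcomm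
      obtain ⟨Q', hQ'gt, hQ'lt, hcomm2, hble, hQle⟩ :=
        holder_core hd lam hgt hlt hfixt P Q c hQ hQP hcomm hcfix
      have hcomm2' : Q⁻¹ * Q'⁻¹ * Q * Q' = (c⁻¹)⁻¹ := by rw [inv_inv]; exact hcomm2
      obtain ⟨Q'', hQ''gt, hQ''lt, hcomm3, hble2, hQle2⟩ :=
        holder_core hd lam hgt hlt hfixt Q Q' c⁻¹ hQ'gt (le_of_lt hQ'lt) hcomm2' hcinvfix
      have hIH : ρ (c ^ (m + 1)) lam ≤ ρ Q' lam :=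
        ih Q' Q'' hQ''gt (le_of_lt hQ''lt) hcomm3
      have hstep : ρ (c ^ (m + 2)) lam = ρ c (ρ (c ^ (m + 1)) lam) := by
        rw [pow_succ' c (m + 1), hd.rmul]
      have h1 : ρ (c ^ (m + 2)) lam ≤ ρ c (ρ Q' lam) := by
        rw [hstep]
        exact (hd.rle_iff c).2 hIH
      have h2 : ρ c (ρ Q' lam) < ρ Q (ρ Q' lam) := by
        have hneg : ρ (Q⁻¹ * c) lam < lam := by
          rw [hd.rmul]
          have h3 : ρ c lam < ρ Q lam := lt_of_le_of_lt hble hQ'lt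
          have := (hd.rlt_iff Q⁻¹).2 h3
          rwa [hd.rinv] at this
        have h4 := hlt (Q⁻¹ * c) hneg (ρ Q' lam)
        rw [hd.rmul] at h4
        have := (hd.rlt_iff Q).2 h4
        rwa [hd.rinv'] at this
      calc ρ (c ^ (m + 1 + 1)) lam ≤ ρ c (ρ Q' lam) := h1
        _ ≤ ρ Q (ρ Q' lam) := le_of_lt h2
        _ ≤ ρ P lam := hQle

end Holder


end ConradianFP

/-- Let `⪯` be a Conradian left-ordering of a countable group
`G` with dynamical realization `ρ`, and let `N` be the set of elements having a
fixed point.  Then `N` is a normal subgroup; moreover, if some `g ∈ G` has no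
fixed point, then `G/N` is a nontrivial torsion-free abelian group acting
freely on the nonempty set of global fixed points of `N`. -/
theorem conradian_fixed_point_subgroup
    {G : Type*} [Group G] [Countable G]
    (o : LeftOrder G) (hc : o.IsConradian)
    (ρ : G → ℝ → ℝ) (hρ : IsDynRealization o ρ) :
    ∃ N : Subgroup G, N.Normal ∧ (N : Set G) = {g : G | ∃ x : ℝ, ρ g x = x} ∧
      ((∃ g : G, ∀ x : ℝ, ρ g x ≠ x) →
        -- `G/N` is nontrivial:
        (∃ g : G, g ∉ N) ∧
        -- `G/N` is abelian:
        (∀ g h : G, g * h * g⁻¹ * h⁻¹ ∈ N) ∧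
        -- `G/N` is torsion-free:
        (∀ (g : G) (n : ℕ), 0 < n → g ^ n ∈ N → g ∈ N) ∧
        -- the set of global fixed points of `N` is nonempty:
        {x : ℝ | ∀ g ∈ N, ρ g x = x}.Nonempty ∧
        -- `G` (hence `G/N`) acts on this set:
        (∀ g : G, ∀ x ∈ {x : ℝ | ∀ g ∈ N, ρ g x = x},
          ρ g x ∈ {x : ℝ | ∀ g ∈ N, ρ g x = x}) ∧
        -- and the induced action of `G/N` is free:
        (∀ g : G, ∀ x ∈ {x : ℝ | ∀ g ∈ N, ρ g x = x}, ρ g x = x → g ∈ N)) := by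
  classical
  obtain ⟨hmono, hsurj, hone, hmul, hnofix, hord, _hint⟩ := hρ
  have hd : ConradianFP.DRh ρ := ⟨hmono, hsurj, hone, hmul⟩
  have horb := ConradianFP.orb_above hd hnofix
  set N : Subgroup G :=
    { carrier := {g : G | ∃ x : ℝ, ρ g x = x}
      one_mem' := ⟨0, by rw [hone]; rfl⟩
      mul_mem' := fun {f g} hf hg => ConradianFP.mul_fixed hd o hord hc horb f g hf hg
      inv_mem' := fun {g} hg => by
        obtain ⟨x, hx⟩ := hg
        exact ⟨x, ConradianFP.inv_fixed hd g x hx⟩ } with hNdef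
  have hnormal : N.Normal := by
    constructor
    intro n hn g
    obtain ⟨x, hx⟩ := hn
    refine ⟨ρ g x, ?_⟩
    rw [hd.rmul, hd.rmul, hd.rinv, hx]
  refine ⟨N, hnormal, rfl, ?_⟩
  rintro ⟨g₀, hg₀⟩
  have hg₀N : g₀ ∉ N := by
    intro hmem
    obtain ⟨x, hx⟩ := hmem
    exact hg₀ x hx
  obtain ⟨g₁, hg₁pos⟩ : ∃ g₁ : G, ∀ x, x < ρ g₁ x := by
    rcases hd.sign_dichotomy g₀ hg₀ with h | h
    · exact ⟨g₀, h⟩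
    · refine ⟨g₀⁻¹, fun x => ?_⟩
      have := h (ρ g₀⁻¹ x)
      rwa [hd.rinv'] at this
  have hg₁N : g₁ ∉ N := by
    rintro ⟨x, hx⟩
    exact (ne_of_gt (hg₁pos x)) hx
  -- every element of `N` is dominated by `g₁`
  have hbound : ∀ n : G, n ∈ N → ∀ x, ρ n x < ρ g₁ x := by
    intro n hn x
    have hw : (g₁⁻¹ * n) ∉ N := by
      intro hmem
      apply hg₁N
      have e : g₁ = n * (g₁⁻¹ * n)⁻¹ := by group
      rw [e]
      exact N.mul_mem hn (N.inv_mem hmem)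
    have hwnofix : ∀ y, ρ (g₁⁻¹ * n) y ≠ y := fun y hy => hw ⟨y, hy⟩
    rcases hd.sign_dichotomy _ hwnofix with hpos | hneg
    · exfalso
      obtain ⟨z, hz⟩ := hn
      have h1 := hpos z
      rw [hd.rmul, hz] at h1
      have h2 : ρ g₁⁻¹ z < z := by
        have := hg₁pos (ρ g₁⁻¹ z)
        rwa [hd.rinv'] at this
      linarith
    · have h1 := hneg x
      rw [hd.rmul] at h1
      have h2 := (hd.rlt_iff g₁).2 h1
      rwa [hd.rinv'] at h2
  -- the global fixed point `lam` of `N`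
  set S : Set ℝ := (fun n : G => ρ n 0) '' (N : Set G) with hSdef
  have hSne : S.Nonempty := ⟨ρ 1 0, ⟨1, N.one_mem, rfl⟩⟩
  have hSbdd : BddAbove S := ⟨ρ g₁ 0, by rintro y ⟨n, hn, rfl⟩; exact le_of_lt (hbound n hn 0)⟩
  set lam := sSup S with hlamdef
  have hlamfix : ∀ n : G, n ∈ N → ρ n lam = lam := by
    intro n hn
    have himg : ρ n '' S = S := by
      ext y
      constructor
      · rintro ⟨w, ⟨m, hm, rfl⟩, rfl⟩
        exact ⟨n * m, N.mul_mem hn hm, by simpa using hd.rmul n m 0⟩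
      · rintro ⟨m, hm, rfl⟩
        refine ⟨ρ (n⁻¹ * m) 0, ⟨n⁻¹ * m, N.mul_mem (N.inv_mem hn) hm, rfl⟩, ?_⟩
        rw [← hd.rmul]
        have e : n * (n⁻¹ * m) = m := by group
        rw [e]
    rw [hd.rmap_csSup n S hSne hSbdd, himg]
  have hNfixlam : ∀ w : G, ρ w lam = lam → w ∈ N := fun w hw => ⟨lam, hw⟩
  -- invariance of the global fixed point set
  have hLaminv : ∀ x : ℝ, (∀ n ∈ N, ρ n x = x) → ∀ g : G, ∀ n ∈ N, ρ n (ρ g x) = ρ g x := by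
    intro x hx g n hn
    have hn' : g⁻¹ * n * g ∈ N := by
      have := hnormal.conj_mem n hn g⁻¹
      rwa [inv_inv] at this
    have e : n * g = g * (g⁻¹ * n * g) := by group
    calc ρ n (ρ g x) = ρ (n * g) x := (hd.rmul n g x).symm
      _ = ρ (g * (g⁻¹ * n * g)) x := by rw [e]
      _ = ρ g (ρ (g⁻¹ * n * g) x) := hd.rmul _ _ _
      _ = ρ g x := by rw [hx _ hn']
  -- transfer lemmas at lam
  have hgt : ∀ w : G, lam < ρ w lam → ∀ x, x < ρ w x := by
    intro w hw x
    have hwN : w ∉ N := by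
      intro hmem
      rw [hlamfix w hmem] at hw
      exact lt_irrefl lam hw
    have hwnofix : ∀ y, ρ w y ≠ y := fun y hy => hwN ⟨y, hy⟩
    rcases hd.sign_dichotomy w hwnofix with h | h
    · exact h x
    · exact absurd hw (not_lt.2 (le_of_lt (h lam)))
  have hlt : ∀ w : G, ρ w lam < lam → ∀ x, ρ w x < x := by
    intro w hw x
    have hwN : w ∉ N := by
      intro hmem
      rw [hlamfix w hmem] at hw
      exact lt_irrefl lam hw
    have hwnofix : ∀ y, ρ w y ≠ y := fun y hy => hwN ⟨y, hy⟩
    rcases hd.sign_dichotomy w hwnofix with h | h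
    · exact absurd hw (not_lt.2 (le_of_lt (h lam)))
    · exact h x
  have hfixt : ∀ w : G, ρ w lam = lam → ∀ u : G, ρ w (ρ u lam) = ρ u lam := by
    intro w hw u
    exact hLaminv lam (fun n hn => hlamfix n hn) u w (hNfixlam w hw)
  -- Hölder: elements strictly positive at `lam` commute modulo `N`
  have hholder : ∀ u v : G, lam < ρ u lam → lam < ρ v lam → ρ v lam ≤ ρ u lam →
      u⁻¹ * v⁻¹ * u * v ∈ N := by
    intro u v hu hv hvu
    by_contra hdN
    set d : G := u⁻¹ * v⁻¹ * u * v with hddef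
    have hdlam : ρ d lam ≠ lam := fun he => hdN (hNfixlam d he)
    rcases lt_or_gt_of_ne hdlam with hneg | hpos
    · -- the commutator is negative at lam; use c := d⁻¹
      have hclam : lam < ρ d⁻¹ lam := by
        have := (hd.rlt_iff d⁻¹).2 hneg
        rwa [hd.rinv] at this
      have hcomm : u⁻¹ * v⁻¹ * u * v = (d⁻¹)⁻¹ := by rw [inv_inv]
      have hcl := ConradianFP.holder_claim hd lam hgt hlt hfixt d⁻¹ hclam
      have hposd : ∀ x, x < ρ d⁻¹ x := hgt d⁻¹ hclam
      obtain ⟨n, hn⟩ := hd.pow_unbounded d⁻¹ hposd lam (ρ u lam)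
      have hbnd := hcl n u v hv hvu hcomm
      have hmono2 : ρ (d⁻¹ ^ n) lam ≤ ρ (d⁻¹ ^ (n + 1)) lam := by
        rw [pow_succ' d⁻¹ n, hd.rmul]
        exact le_of_lt (hposd _)
      linarith
    · -- the commutator is positive at lam; advance one step, then use c := d
      have hdinvfix : ρ d⁻¹ lam = lam → False := by
        intro he
        apply hdlam
        have := congrArg (ρ d) he
        rw [hd.rinv'] at this
        exact this.symm
      have hcomm : u⁻¹ * v⁻¹ * u * v = (d⁻¹)⁻¹ := by rw [inv_inv]
      obtain ⟨Q', hQ'gt, hQ'lt, hcomm2, _, _⟩ :=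
        ConradianFP.holder_core hd lam hgt hlt hfixt u v d⁻¹ hv hvu hcomm hdinvfix
      have hcl := ConradianFP.holder_claim hd lam hgt hlt hfixt d hpos
      have hposd : ∀ x, x < ρ d x := hgt d hpos
      obtain ⟨n, hn⟩ := hd.pow_unbounded d hposd lam (ρ v lam)
      have hbnd := hcl n v Q' hQ'gt (le_of_lt hQ'lt) hcomm2
      have hmono2 : ρ (d ^ n) lam ≤ ρ (d ^ (n + 1)) lam := by
        rw [pow_succ' d n, hd.rmul]
        exact le_of_lt (hposd _)
      linarith
  refine ⟨⟨g₀, hg₀N⟩, ?_, ?_, ⟨lam, fun n hn => hlamfix n hn⟩,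
    fun g x hx n hn => hLaminv x hx g n hn, fun g x _ hgx => ⟨x, hgx⟩⟩
  · -- abelian
    intro g h
    by_contra hc₀
    have hgN : g ∉ N := by
      intro hg
      apply hc₀
      have h1 : h * g⁻¹ * h⁻¹ ∈ N := hnormal.conj_mem g⁻¹ (N.inv_mem hg) h
      have e : g * h * g⁻¹ * h⁻¹ = g * (h * g⁻¹ * h⁻¹) := by group
      rw [e]
      exact N.mul_mem hg h1
    have hhN : h ∉ N := by
      intro hh
      apply hc₀
      have h1 : g * h * g⁻¹ ∈ N := hnormal.conj_mem h hh g
      exact N.mul_mem h1 (N.inv_mem hh)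
    have hfin : ∀ dd w : G, dd ∈ N → g * h * g⁻¹ * h⁻¹ = w * dd * w⁻¹ → False := by
      intro dd w hdd he
      exact hc₀ (he ▸ hnormal.conj_mem dd hdd w)
    have hfininv : ∀ dd w : G, dd ∈ N → g * h * g⁻¹ * h⁻¹ = w * dd⁻¹ * w⁻¹ → False := by
      intro dd w hdd he
      exact hc₀ (he ▸ hnormal.conj_mem dd⁻¹ (N.inv_mem hdd) w)
    obtain ⟨g', hg'pos, hg'cases⟩ : ∃ g' : G, lam < ρ g' lam ∧ (g' = g ∨ g' = g⁻¹) := by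
      rcases lt_trichotomy (ρ g lam) lam with hl | he | hgt' 
      · refine ⟨g⁻¹, ?_, Or.inr rfl⟩
        have := (hd.rlt_iff g⁻¹).2 hl
        rwa [hd.rinv] at this
      · exact absurd (hNfixlam g he) hgN
      · exact ⟨g, hgt', Or.inl rfl⟩
    obtain ⟨h', hh'pos, hh'cases⟩ : ∃ h' : G, lam < ρ h' lam ∧ (h' = h ∨ h' = h⁻¹) := by
      rcases lt_trichotomy (ρ h lam) lam with hl | he | hgt' 
      · refine ⟨h⁻¹, ?_, Or.inr rfl⟩
        have := (hd.rlt_iff h⁻¹).2 hl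
        rwa [hd.rinv] at this
      · exact absurd (hNfixlam h he) hhN
      · exact ⟨h, hgt', Or.inl rfl⟩
    rcases le_total (ρ h' lam) (ρ g' lam) with hord' | hord'
    · have hdmem := hholder g' h' hg'pos hh'pos hord'
      rcases hg'cases with he | he <;> rcases hh'cases with he2 | he2 <;>
        rw [he, he2] at hdmem
      · exact hfin _ (g * h) hdmem (by group)
      · exact hfininv _ g hdmem (by group)
      · exact hfininv _ h hdmem (by group)
      · exact hfin _ 1 hdmem (by group)
    · have hdmem := hholder h' g' hh'pos hg'pos hord'
      rcases hg'cases with he | he <;> rcases hh'cases with he2 | he2 <;>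
        rw [he, he2] at hdmem
      · exact hfininv _ (g * h) hdmem (by group)
      · exact hfin _ g hdmem (by group)
      · exact hfin _ h hdmem (by group)
      · exact hfininv _ 1 hdmem (by group)
  · -- torsion-free
    intro g n hn hgn
    by_contra hgN2
    have hnofixg : ∀ y, ρ g y ≠ y := fun y hy => hgN2 ⟨y, hy⟩
    obtain ⟨m, rfl⟩ : ∃ m, n = m + 1 := ⟨n - 1, by omega⟩
    obtain ⟨x, hx⟩ := hgn
    rcases hd.sign_dichotomy g hnofixg with hp | hq
    · have h1 : x < ρ (g ^ (m + 1)) x := by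
        rw [pow_succ' g m, hd.rmul]
        exact lt_of_le_of_lt (hd.pow_le g hp m x) (hp _)
      rw [hx] at h1
      exact lt_irrefl x h1
    · have hpinv : ∀ y, y < ρ g⁻¹ y := by
        intro y
        have := hq (ρ g⁻¹ y)
        rwa [hd.rinv'] at this
      have hxinv : ρ ((g⁻¹) ^ (m + 1)) x = x := by
        rw [inv_pow]
        exact ConradianFP.inv_fixed hd _ x hx
      have h1 : x < ρ ((g⁻¹) ^ (m + 1)) x := by
        rw [pow_succ' g⁻¹ m, hd.rmul]
        exact lt_of_le_of_lt (hd.pow_le g⁻¹ hpinv m x) (hpinv _)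
      rw [hxinv] at h1
      exact lt_irrefl x h1
end

section
/- Let (Γ,⪯) be a countable left-ordered group, fix a dynamical realization of (Γ,⪯), let T be a nontrivial ⪯-convex subgroup of Γ, and let I_T be the minimal open interval containing 0 that is invariant under T (equivalently, the open convex hull of the orbit T·0). Then every element of Γ either maps I_T onto itself or maps I_T to an interval disjoint from I_T; in particular, the setwise stabilizer of I_T in Γ is exactly T. -/
/-- Let `(Γ, ⪯)` be a countable left-ordered group with
dynamical realization `ρ`, let `T` be a nontrivial `⪯`-convex subgroup and let
`I_T` be the minimal open interval containing `0` invariant under `T`, i.e. the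
open convex hull of the orbit `T·0`.  Then every element of `Γ` either maps
`I_T` onto itself or maps it to a disjoint interval; in particular the setwise
stabilizer of `I_T` is exactly `T`. -/
theorem stabilizer_of_convex_interval
    {Γ : Type*} [Group Γ] [Countable Γ]
    (o : LeftOrder Γ) (ρ : Γ → ℝ → ℝ) (hρ : IsDynRealization o ρ)
    (T : Subgroup Γ) (hTnt : T ≠ ⊥) (hconv : o.IsConvex T)
    (I : Set ℝ)
    (hI : I = {x : ℝ | ∃ t₁ ∈ T, ∃ t₂ ∈ T, ρ t₁ 0 < x ∧ x < ρ t₂ 0}) :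
    (∀ f : Γ, ρ f '' I = I ∨ Disjoint (ρ f '' I) I) ∧
    (∀ f : Γ, ρ f '' I = I ↔ f ∈ T) := by

  obtain ⟨mono, surj, hone, hmul, -, hlt, -⟩ := hρ
  have comp : ∀ g h : Γ, ∀ x : ℝ, ρ g (ρ h x) = ρ (g * h) x := by
    intro g h x; rw [hmul]; rfl
  have hid : ∀ x : ℝ, ρ (1 : Γ) x = x := by intro x; rw [hone]; rfl
  have hinv : ∀ g : Γ, ∀ x : ℝ, ρ g⁻¹ (ρ g x) = x := by
    intro g x; rw [comp, inv_mul_cancel, hid]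
  have eq0 : ∀ a b : Γ, ρ a 0 = ρ b 0 → a = b := by
    intro a b h
    rcases o.total a b with hl | he | hl
    · exact absurd ((hlt a b).1 hl) (by rw [h]; exact lt_irrefl _)
    · exact he
    · exact absurd ((hlt b a).1 hl) (by rw [h]; exact lt_irrefl _)
  obtain ⟨⟨t, htT⟩, htne⟩ := Subgroup.ne_bot_iff_exists_ne_one.1 hTnt
  have htne' : t ≠ 1 := by simpa [Subtype.ext_iff] using htne
  have ht0 : ρ t 0 ≠ 0 := fun h => htne' (eq0 t 1 (by rw [h, hid]))
  have zero_mem : (0 : ℝ) ∈ I := by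
    rw [hI]
    rcases ht0.lt_or_gt with h | h
    · refine ⟨t, htT, t⁻¹, T.inv_mem htT, h, ?_⟩
      have := mono t⁻¹ h
      rwa [hinv] at this
    · refine ⟨t⁻¹, T.inv_mem htT, t, htT, ?_, h⟩
      have := mono t⁻¹ h
      rwa [hinv] at this
  have mem_orbit : ∀ g : Γ, ρ g 0 ∈ I → g ∈ T := by
    intro g hg
    rw [hI] at hg
    obtain ⟨t₁, h₁, t₂, h₂, lo, hi⟩ := hg
    exact hconv g t₁ t₂ h₁ h₂ (Or.inl ((hlt t₁ g).2 lo)) (Or.inl ((hlt g t₂).2 hi))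
  have maps : ∀ s : Γ, s ∈ T → ∀ x ∈ I, ρ s x ∈ I := by
    intro s hs x hx
    rw [hI] at hx ⊢
    obtain ⟨t₁, h₁, t₂, h₂, lo, hi⟩ := hx
    refine ⟨s * t₁, T.mul_mem hs h₁, s * t₂, T.mul_mem hs h₂, ?_, ?_⟩
    · rw [← comp]; exact mono s lo
    · rw [← comp]; exact mono s hi
  have img_eq : ∀ s : Γ, s ∈ T → ρ s '' I = I := by
    intro s hs
    apply Set.Subset.antisymm
    · rintro _ ⟨x, hx, rfl⟩; exact maps s hs x hx
    · intro y hy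
      exact ⟨ρ s⁻¹ y, maps s⁻¹ (T.inv_mem hs) y hy, by rw [comp, mul_inv_cancel, hid]⟩
  have key : ∀ f : Γ, ∀ x ∈ I, ρ f x ∈ I → f ∈ T := by
    intro f x hx hfx
    rw [hI] at hx hfx
    obtain ⟨t₁, h₁, t₂, h₂, lo, hi⟩ := hx
    obtain ⟨t₃, h₃, t₄, h₄, lo', hi'⟩ := hfx
    by_cases hc : ρ t₃ 0 < ρ (f * t₁) 0
    · have hup : ρ (f * t₁) 0 < ρ t₄ 0 := by
        rw [← comp]
        exact lt_trans (mono f lo) hi'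
      have hft : f * t₁ ∈ T := mem_orbit _ (by rw [hI]; exact ⟨t₃, h₃, t₄, h₄, hc, hup⟩)
      have := T.mul_mem hft (T.inv_mem h₁)
      simpa using this
    · push_neg at hc
      set g : Γ := f⁻¹ * t₃ with hg
      have hg_lo : ρ t₁ 0 ≤ ρ g 0 := by
        have := (mono f⁻¹).monotone hc
        rwa [comp, comp, show f⁻¹ * (f * t₁) = t₁ by group] at this
      have hg_hi : ρ g 0 < ρ t₂ 0 := by
        have h1 : ρ g 0 < x := by
          have := mono f⁻¹ lo'
          rwa [comp, hinv] at this
        exact lt_trans h1 hi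
      rcases hg_lo.lt_or_eq with hlt' | heq
      · have hgT : g ∈ T := mem_orbit g (by rw [hI]; exact ⟨t₁, h₁, t₂, h₂, hlt', hg_hi⟩)
        have hfi : f⁻¹ ∈ T := by
          have := T.mul_mem hgT (T.inv_mem h₃)
          simpa [hg, mul_assoc] using this
        simpa using T.inv_mem hfi
      · have ht1g : t₁ = g := eq0 _ _ heq
        have hfi : f⁻¹ ∈ T := by
          have h' : t₁ * t₃⁻¹ ∈ T := T.mul_mem h₁ (T.inv_mem h₃)
          have hfe : f⁻¹ = t₁ * t₃⁻¹ := by rw [ht1g, hg]; group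
          rw [hfe]; exact h'
        simpa using T.inv_mem hfi
  have stab : ∀ f : Γ, ρ f '' I = I ↔ f ∈ T := by
    intro f
    constructor
    · intro h
      have h0 : (0 : ℝ) ∈ ρ f '' I := h.symm ▸ zero_mem
      obtain ⟨x, hx, hx0⟩ := h0
      exact key f x hx (hx0 ▸ zero_mem)
    · exact img_eq f
  refine ⟨fun f => ?_, stab⟩
  by_cases hf : f ∈ T
  · exact Or.inl ((stab f).2 hf)
  · right
    rw [Set.disjoint_left]
    rintro y ⟨x, hx, rfl⟩ hy
    exact hf (key f x hx hy)
end
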